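/- arXiv:2008.03047 — 3 statements merged into one kernel-verified Lean document; each statement's English description precedes it below -/
import Mathlib

section
/- For every nonzero ξ ∈ ℝ³, the 4×3 matrix b(ξ) with upper 3×3 block r(ξ)μ₀^{-1/2} and bottom row ξᵗ μ₀^{1/2} has rank 3, where μ₀ is a symmetric positive definite real 3×3 matrix and r(ξ) is the cross-product matrix. -/
open Matrix

/-- The cross-product matrix `r(ξ)`, satisfying `r(ξ) v = ξ × v`. -/
def crossMatrix (ξ : Fin 3 → ℝ) : Matrix (Fin 3) (Fin 3) ℝ :=
  !![0, -ξ 2, ξ 1; ξ 2, 0, -ξ 0; -ξ 1, ξ 0, 0]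

/-- The `4×3` symbol `b(ξ)` with upper `3×3` block `r(ξ) μ₀^{-1/2}` and bottom row
`ξᵗ μ₀^{1/2}`, where `s = μ₀^{1/2}`. -/
noncomputable def symbolB (s : Matrix (Fin 3) (Fin 3) ℝ) (ξ : Fin 3 → ℝ) : Matrix (Fin 4) (Fin 3) ℝ :=
  Matrix.of fun i j =>
    if h : (i : ℕ) < 3 then (crossMatrix ξ * s⁻¹) ⟨i, h⟩ j else (ξ ᵥ* s) j


lemma crossMatrix_mulVec (ξ w : Fin 3 → ℝ) : crossMatrix ξ *ᵥ w = ξ ⨯₃ w := by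
  funext i
  fin_cases i <;>
    simp [crossMatrix, cross_apply, mulVec, dotProduct, Fin.sum_univ_three] <;> ring

lemma cross_eq_zero_imp (ξ w : Fin 3 → ℝ) (hξ : ξ ≠ 0) (h : ξ ⨯₃ w = 0) :
    ∃ c : ℝ, w = c • ξ := by
  have h' : w ⨯₃ ξ = 0 := by rw [← cross_anticomm, h, neg_zero]
  by_contra hc
  push_neg at hc
  have : LinearIndependent ℝ ![w, ξ] := by
    rw [linearIndependent_fin2]
    refine ⟨hξ, fun a ha => hc a ?_⟩
    simp only [Matrix.cons_val_one, Matrix.head_cons, Matrix.cons_val_zero] at ha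
    exact ha.symm
  exact (crossProduct_ne_zero_iff_linearIndependent.mpr this) h'

/-- for every nonzero `ξ ∈ ℝ³`, the matrix `b(ξ)` has rank `3`, where
`μ₀ = s * s` is symmetric positive definite with symmetric positive definite square
root `s`. -/
theorem symbolB_rank (μ₀ s : Matrix (Fin 3) (Fin 3) ℝ)
    (hμ₀ : μ₀.PosDef) (hμ₀symm : μ₀.IsSymm)
    (hs : s.PosDef) (hssymm : s.IsSymm) (hsq : s * s = μ₀)
    (ξ : Fin 3 → ℝ) (hξ : ξ ≠ 0) :
    (symbolB s ξ).rank = 3 := by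
  have hsinv : IsUnit s.det := by
    simpa using hs.det_pos.ne'.isUnit
  have hinj : Function.Injective (symbolB s ξ).mulVecLin := by
    rw [← LinearMap.ker_eq_bot, LinearMap.ker_eq_bot']
    intro v hv
    simp only [mulVecLin_apply] at hv
    have hup : crossMatrix ξ *ᵥ (s⁻¹ *ᵥ v) = 0 := by
      rw [mulVec_mulVec]
      funext i
      have := congrFun hv ⟨i, by omega⟩
      simpa [symbolB, mulVec, dotProduct, i.isLt] using this
    rw [crossMatrix_mulVec] at hup
    obtain ⟨c, hc⟩ := cross_eq_zero_imp ξ _ hξ hup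
    have hv_eq : v = c • (s *ᵥ ξ) := by
      have := congrArg (fun w => s *ᵥ w) hc
      simp only [mulVec_smul] at this
      rwa [mulVec_mulVec, Matrix.mul_nonsing_inv s hsinv, one_mulVec] at this
    have hbot : (ξ ᵥ* s) ⬝ᵥ v = 0 := by
      have := congrFun hv 3
      simpa [symbolB, mulVec, dotProduct] using this
    rw [hv_eq] at hbot
    have hquad : (0:ℝ) < ξ ⬝ᵥ μ₀ *ᵥ ξ := by
      have := hμ₀.dotProduct_mulVec_pos hξ
      simpa using this
    have : (ξ ᵥ* s) ⬝ᵥ (c • (s *ᵥ ξ)) = c * (ξ ⬝ᵥ μ₀ *ᵥ ξ) := by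
      rw [dotProduct_smul, ← dotProduct_mulVec, mulVec_mulVec, hsq]
      simp [smul_eq_mul]
    rw [this] at hbot
    have hc0 : c = 0 := by
      rcases mul_eq_zero.mp hbot with h | h
      · exact h
      · exact absurd h hquad.ne'
    rw [hv_eq, hc0, zero_smul]
  have := LinearMap.finrank_range_of_inj hinj
  rw [Matrix.rank, this]
  simp
end

section
/- For every unit vector ξ ∈ ℝ³ (|ξ| = 1), the matrix b(ξ)*b(ξ) satisfies α₀·1₃ ≤ b(ξ)*b(ξ) ≤ α₁·1₃ in the sense of quadratic forms, where α₀ = min{‖μ₀‖⁻¹, ‖μ₀⁻¹‖⁻¹} and α₁ = ‖μ₀‖ + ‖μ₀⁻¹‖ (operator norms). -/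
open Matrix
open scoped Matrix.Norms.L2Operator

lemma dot_self_nonneg' (v : Fin 3 → ℝ) : 0 ≤ v ⬝ᵥ v :=
  Finset.sum_nonneg fun _ _ => mul_self_nonneg _

lemma dot_cauchy (v w : Fin 3 → ℝ) : (v ⬝ᵥ w)^2 ≤ (v ⬝ᵥ v) * (w ⬝ᵥ w) := by
  simpa [dotProduct, sq] using Finset.sum_mul_sq_le_sq_mul_sq Finset.univ v w

lemma euc_norm_sq (v : EuclideanSpace ℝ (Fin 3)) : ‖v‖ ^ 2 = v ⬝ᵥ v := by
  rw [EuclideanSpace.norm_eq, Real.sq_sqrt (by positivity)]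
  simp [dotProduct, sq, Real.norm_eq_abs, abs_mul_abs_self]

lemma dot_mulVec_le (A : Matrix (Fin 3) (Fin 3) ℝ) (v : Fin 3 → ℝ) :
    v ⬝ᵥ (A *ᵥ v) ≤ ‖A‖ * (v ⬝ᵥ v) := by
  have h1 := dot_cauchy v (A *ᵥ v)
  have h2 : ‖(EuclideanSpace.equiv (Fin 3) ℝ).symm (A *ᵥ v)‖
      ≤ ‖A‖ * ‖(EuclideanSpace.equiv (Fin 3) ℝ).symm v‖ := A.l2_opNorm_mulVec _
  have h3 : (A *ᵥ v) ⬝ᵥ (A *ᵥ v) ≤ ‖A‖^2 * (v ⬝ᵥ v) := by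
    have h4 := mul_self_le_mul_self (norm_nonneg _) h2
    rw [← sq, ← sq, mul_pow] at h4
    rw [euc_norm_sq, euc_norm_sq] at h4
    exact h4
  have hb : (0:ℝ) ≤ ‖A‖ * (v ⬝ᵥ v) := mul_nonneg (norm_nonneg _) (dot_self_nonneg' v)
  have h5 : (v ⬝ᵥ (A *ᵥ v))^2 ≤ (‖A‖ * (v ⬝ᵥ v))^2 := by
    calc (v ⬝ᵥ (A *ᵥ v))^2 ≤ (v ⬝ᵥ v) * ((A *ᵥ v) ⬝ᵥ (A *ᵥ v)) := h1
    _ ≤ (v ⬝ᵥ v) * (‖A‖^2 * (v ⬝ᵥ v)) :=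
        mul_le_mul_of_nonneg_left h3 (dot_self_nonneg' v)
    _ = (‖A‖ * (v ⬝ᵥ v))^2 := by ring
  exact le_of_pow_le_pow_left₀ two_ne_zero hb h5

lemma cross_sq (ξ v : Fin 3 → ℝ) (hξ : ∑ i, ξ i ^ 2 = 1) :
    (crossMatrix ξ *ᵥ v) ⬝ᵥ (crossMatrix ξ *ᵥ v) = v ⬝ᵥ v - (ξ ⬝ᵥ v)^2 := by
  rw [Fin.sum_univ_three] at hξ
  simp [crossMatrix, mulVec, dotProduct, Fin.sum_univ_three]
  linear_combination (v 0^2 + v 1^2 + v 2^2) * hξ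

lemma dot_sym (A : Matrix (Fin 3) (Fin 3) ℝ) (hA : Aᵀ = A) (u w : Fin 3 → ℝ) :
    u ⬝ᵥ (A *ᵥ w) = w ⬝ᵥ (A *ᵥ u) :=
  calc u ⬝ᵥ (A *ᵥ w) = (u ᵥ* A) ⬝ᵥ w := Matrix.dotProduct_mulVec u A w
  _ = (Aᵀ *ᵥ u) ⬝ᵥ w := by rw [Matrix.mulVec_transpose]
  _ = (A *ᵥ u) ⬝ᵥ w := by rw [hA]
  _ = w ⬝ᵥ (A *ᵥ u) := dotProduct_comm _ _

lemma dot_mul_shift (A : Matrix (Fin 3) (Fin 3) ℝ) (hA : Aᵀ = A) (u w : Fin 3 → ℝ) :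
    (A *ᵥ u) ⬝ᵥ (A *ᵥ w) = u ⬝ᵥ ((A * A) *ᵥ w) :=
  calc (A *ᵥ u) ⬝ᵥ (A *ᵥ w) = ((A *ᵥ u) ᵥ* A) ⬝ᵥ w := Matrix.dotProduct_mulVec _ A w
  _ = (Aᵀ *ᵥ (A *ᵥ u)) ⬝ᵥ w := by rw [Matrix.mulVec_transpose]
  _ = ((A * A) *ᵥ u) ⬝ᵥ w := by rw [hA, Matrix.mulVec_mulVec]
  _ = w ⬝ᵥ ((A * A) *ᵥ u) := dotProduct_comm _ _
  _ = u ⬝ᵥ ((A * A) *ᵥ w) := dot_sym (A * A) (by rw [Matrix.transpose_mul, hA]) w u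

lemma symbolB_mulVec_lt (s : Matrix (Fin 3) (Fin 3) ℝ) (ξ x : Fin 3 → ℝ) (i : Fin 4)
    (h : (i : ℕ) < 3) :
    ((symbolB s ξ) *ᵥ x) i = (crossMatrix ξ *ᵥ (s⁻¹ *ᵥ x)) ⟨i, h⟩ := by
  rw [mulVec_mulVec]
  simp only [mulVec, dotProduct, symbolB, Matrix.of_apply, dif_pos h]

lemma symbolB_mulVec_last (s : Matrix (Fin 3) (Fin 3) ℝ) (ξ x : Fin 3 → ℝ) :
    ((symbolB s ξ) *ᵥ x) 3 = ξ ⬝ᵥ (s *ᵥ x) := by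
  rw [Matrix.dotProduct_mulVec]
  simp only [mulVec, dotProduct, symbolB, Matrix.of_apply,
    dif_neg (show ¬((3 : Fin 4) : ℕ) < 3 by decide)]

lemma symbolB_quad (s : Matrix (Fin 3) (Fin 3) ℝ) (ξ x : Fin 3 → ℝ) :
    ((symbolB s ξ) *ᵥ x) ⬝ᵥ ((symbolB s ξ) *ᵥ x)
      = (crossMatrix ξ *ᵥ (s⁻¹ *ᵥ x)) ⬝ᵥ (crossMatrix ξ *ᵥ (s⁻¹ *ᵥ x))
        + (ξ ⬝ᵥ (s *ᵥ x))^2 := by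
  have h0 := symbolB_mulVec_lt s ξ x 0 (by norm_num)
  have h1 := symbolB_mulVec_lt s ξ x 1 (by norm_num)
  have h2 := symbolB_mulVec_lt s ξ x 2 (by norm_num)
  have h3 := symbolB_mulVec_last s ξ x
  have e0 : (⟨((0 : Fin 4) : ℕ), by norm_num⟩ : Fin 3) = 0 := rfl
  have e1 : (⟨((1 : Fin 4) : ℕ), by norm_num⟩ : Fin 3) = 1 := rfl
  have e2 : (⟨((2 : Fin 4) : ℕ), by norm_num⟩ : Fin 3) = 2 := rfl
  rw [e0] at h0; rw [e1] at h1; rw [e2] at h2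
  simp only [dotProduct, Fin.sum_univ_four, Fin.sum_univ_three, h0, h1, h2, h3]
  ring

/-- for every unit vector `ξ ∈ ℝ³`,
`α₀ · 1₃ ≤ b(ξ)* b(ξ) ≤ α₁ · 1₃` in the sense of quadratic forms, where
`α₀ = min (‖μ₀‖⁻¹, ‖μ₀⁻¹‖⁻¹)` and `α₁ = ‖μ₀‖ + ‖μ₀⁻¹‖` (L² operator norms). -/
theorem symbolB_quadratic_form_bounds (μ₀ s : Matrix (Fin 3) (Fin 3) ℝ)
    (hμ₀ : μ₀.PosDef) (hμ₀symm : μ₀.IsSymm)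
    (hs : s.PosDef) (hssymm : s.IsSymm) (hsq : s * s = μ₀)
    (ξ : Fin 3 → ℝ) (hξ : ∑ i, ξ i ^ 2 = 1) :
    ((symbolB s ξ)ᵀ * symbolB s ξ - min ‖μ₀‖⁻¹ ‖μ₀⁻¹‖⁻¹ • (1 : Matrix (Fin 3) (Fin 3) ℝ)).PosSemidef
      ∧ ((‖μ₀‖ + ‖μ₀⁻¹‖) • (1 : Matrix (Fin 3) (Fin 3) ℝ)
          - (symbolB s ξ)ᵀ * symbolB s ξ).PosSemidef := by
  set B := symbolB s ξ with hB
  set M1 : ℝ := ‖μ₀‖ with hM1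
  set M2 : ℝ := ‖μ₀⁻¹‖ with hM2
  set α : ℝ := min M1⁻¹ M2⁻¹ with hα
  -- basic invertibility facts
  have hsdet : IsUnit s.det := hs.det_pos.ne'.isUnit
  have hsinv : s⁻¹ * s = 1 := Matrix.nonsing_inv_mul s hsdet
  have hsinv' : s * s⁻¹ = 1 := Matrix.mul_nonsing_inv s hsdet
  have hstr : sᵀ = s := hssymm
  have hsitr : (s⁻¹)ᵀ = s⁻¹ := by rw [Matrix.transpose_nonsing_inv, hstr]
  have hμtr : μ₀ᵀ = μ₀ := hμ₀symm
  have hμinv : μ₀⁻¹ = s⁻¹ * s⁻¹ := by rw [← hsq, Matrix.mul_inv_rev]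
  have hξξ : ξ ⬝ᵥ ξ = 1 := by simpa [dotProduct, sq] using hξ
  -- transfer lemmas
  have sdot : ∀ u w : Fin 3 → ℝ, (s *ᵥ u) ⬝ᵥ (s *ᵥ w) = u ⬝ᵥ (μ₀ *ᵥ w) := by
    intro u w; rw [dot_mul_shift s hstr, hsq]
  have sidot : ∀ u w : Fin 3 → ℝ, (s⁻¹ *ᵥ u) ⬝ᵥ (s⁻¹ *ᵥ w) = u ⬝ᵥ (μ₀⁻¹ *ᵥ w) := by
    intro u w; rw [dot_mul_shift s⁻¹ hsitr, ← hμinv]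
  -- positivity of norms
  have hM2pos : 0 < M2 := by
    rw [hM2, norm_pos_iff]
    intro h
    have := hμ₀.inv.det_pos
    rw [h] at this
    simp at this
  have hM1pos : 0 < M1 := by
    rw [hM1, norm_pos_iff]
    intro h
    have := hμ₀.det_pos
    rw [h] at this
    simp at this
  have hm : M2⁻¹ ≤ ξ ⬝ᵥ (μ₀ *ᵥ ξ) := by
    have hc : ((s *ᵥ ξ) ⬝ᵥ (s⁻¹ *ᵥ ξ))^2
        ≤ ((s *ᵥ ξ) ⬝ᵥ (s *ᵥ ξ)) * ((s⁻¹ *ᵥ ξ) ⬝ᵥ (s⁻¹ *ᵥ ξ)) := dot_cauchy _ _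
    have he : (s *ᵥ ξ) ⬝ᵥ (s⁻¹ *ᵥ ξ) = 1 := by
      calc (s *ᵥ ξ) ⬝ᵥ (s⁻¹ *ᵥ ξ) = ((s *ᵥ ξ) ᵥ* s⁻¹) ⬝ᵥ ξ := Matrix.dotProduct_mulVec _ _ _
      _ = ((s⁻¹)ᵀ *ᵥ (s *ᵥ ξ)) ⬝ᵥ ξ := by rw [Matrix.mulVec_transpose]
      _ = ((s⁻¹ * s) *ᵥ ξ) ⬝ᵥ ξ := by rw [hsitr, Matrix.mulVec_mulVec]
      _ = 1 := by rw [hsinv, Matrix.one_mulVec, dotProduct_comm, hξξ]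
    rw [he, sdot, sidot] at hc
    have hub : ξ ⬝ᵥ (μ₀⁻¹ *ᵥ ξ) ≤ M2 * 1 := by
      simpa [hξξ] using dot_mulVec_le μ₀⁻¹ ξ
    have hm0 : 0 ≤ ξ ⬝ᵥ (μ₀ *ᵥ ξ) := by
      rw [← sdot]; exact dot_self_nonneg' _
    rw [inv_le_iff_one_le_mul₀' hM2pos]
    nlinarith
  have hmM1 : ξ ⬝ᵥ (μ₀ *ᵥ ξ) ≤ M1 := by
    simpa [hξξ] using dot_mulVec_le μ₀ ξ
  have hα0 : (0:ℝ) ≤ α := le_min (by positivity) (by positivity)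
  have hαM1 : α * M1 ≤ 1 := by
    have h1 : α ≤ M1⁻¹ := min_le_left _ _
    have h2 : α * M1 ≤ M1⁻¹ * M1 := mul_le_mul_of_nonneg_right h1 hM1pos.le
    rwa [inv_mul_cancel₀ hM1pos.ne'] at h2
  have hαm : α ≤ ξ ⬝ᵥ (μ₀ *ᵥ ξ) := (min_le_right _ _).trans hm
  -- the key pointwise bounds
  have key : ∀ x : Fin 3 → ℝ,
      α * (x ⬝ᵥ x) ≤ x ⬝ᵥ ((Bᵀ * B) *ᵥ x)
        ∧ x ⬝ᵥ ((Bᵀ * B) *ᵥ x) ≤ (M1 + M2) * (x ⬝ᵥ x) := by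
    intro x
    have hquad : x ⬝ᵥ ((Bᵀ * B) *ᵥ x) = (B *ᵥ x) ⬝ᵥ (B *ᵥ x) := by
      rw [← Matrix.mulVec_mulVec, Matrix.dotProduct_mulVec x Bᵀ _, Matrix.vecMul_transpose]
    set y := s⁻¹ *ᵥ x with hy
    have hx : s *ᵥ y = x := by rw [hy, Matrix.mulVec_mulVec, hsinv', Matrix.one_mulVec]
    have hsx : s *ᵥ x = μ₀ *ᵥ y := by
      conv_lhs => rw [← hx]
      rw [Matrix.mulVec_mulVec, hsq]
    have hQ : (B *ᵥ x) ⬝ᵥ (B *ᵥ x) = (y ⬝ᵥ y - (ξ ⬝ᵥ y)^2) + (ξ ⬝ᵥ (μ₀ *ᵥ y))^2 := by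
      rw [hB, symbolB_quad, cross_sq ξ _ hξ, hsx]
    have hxx : x ⬝ᵥ x = y ⬝ᵥ (μ₀ *ᵥ y) := by rw [← hx, sdot]
    have hyy : y ⬝ᵥ y = x ⬝ᵥ (μ₀⁻¹ *ᵥ x) := by rw [hy, sidot]
    set t := ξ ⬝ᵥ y with ht
    set b := ξ ⬝ᵥ (μ₀ *ᵥ y) with hb
    set m := ξ ⬝ᵥ (μ₀ *ᵥ ξ) with hmm
    set p := y - t • ξ with hp
    have hyξ : y ⬝ᵥ ξ = t := by rw [ht, dotProduct_comm]
    have f1 : p ⬝ᵥ p = y ⬝ᵥ y - t^2 := by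
      rw [hp]
      simp only [dotProduct_sub, sub_dotProduct, dotProduct_smul, smul_dotProduct,
        smul_eq_mul, hyξ, hξξ, ← ht]
      ring
    have f2 : p ⬝ᵥ (μ₀ *ᵥ p) = y ⬝ᵥ (μ₀ *ᵥ y) - 2*t*b + t^2*m := by
      rw [hp, Matrix.mulVec_sub, Matrix.mulVec_smul]
      rw [dotProduct_sub, sub_dotProduct, sub_dotProduct, dotProduct_smul, dotProduct_smul,
        smul_dotProduct, smul_dotProduct, dot_sym μ₀ hμtr y ξ, ← hb, ← hmm]
      simp [smul_eq_mul]
      ring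
    have f3 : p ⬝ᵥ (μ₀ *ᵥ p) ≤ M1 * (p ⬝ᵥ p) := dot_mulVec_le μ₀ p
    have hpp : (0:ℝ) ≤ p ⬝ᵥ p := dot_self_nonneg' p
    constructor
    · rw [hquad, hQ, hxx]
      have g1 : 0 ≤ α * (M1 * (p ⬝ᵥ p) - p ⬝ᵥ (μ₀ *ᵥ p)) :=
        mul_nonneg hα0 (sub_nonneg.2 f3)
      have g2 : 0 ≤ (1 - α * M1) * (p ⬝ᵥ p) :=
        mul_nonneg (sub_nonneg.2 hαM1) hpp
      have g3 : 0 ≤ (b - α * t)^2 := sq_nonneg _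
      have g4 : 0 ≤ α * (m - α) * t^2 :=
        mul_nonneg (mul_nonneg hα0 (sub_nonneg.2 hαm)) (sq_nonneg t)
      have expand : y ⬝ᵥ y - t^2 + b^2 - α * (y ⬝ᵥ (μ₀ *ᵥ y))
          = α * (M1 * (p ⬝ᵥ p) - p ⬝ᵥ (μ₀ *ᵥ p)) + (1 - α * M1) * (p ⬝ᵥ p)
            + (b - α * t)^2 + α * (m - α) * t^2 := by
        linear_combination α * f2 - f1
      linarith [g1, g2, g3, g4, expand]
    · rw [hquad, hQ]
      have u1 : y ⬝ᵥ y ≤ M2 * (x ⬝ᵥ x) := by rw [hyy]; exact dot_mulVec_le μ₀⁻¹ x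
      have u2 : b^2 ≤ M1 * (x ⬝ᵥ x) := by
        have hc : (ξ ⬝ᵥ (s *ᵥ x))^2 ≤ (ξ ⬝ᵥ ξ) * ((s *ᵥ x) ⬝ᵥ (s *ᵥ x)) := dot_cauchy _ _
        rw [hξξ, one_mul, sdot, hsx] at hc
        exact hc.trans (dot_mulVec_le μ₀ x)
      linarith [sq_nonneg t, u1, u2]
  -- hermitian facts
  have hBH : (Bᵀ * B).IsHermitian := by
    have h := Matrix.isHermitian_conjTranspose_mul_self B
    rwa [Matrix.conjTranspose_eq_transpose_of_trivial] at h
  have hsm : ∀ c : ℝ, (c • (1 : Matrix (Fin 3) (Fin 3) ℝ)).IsHermitian := by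
    intro c
    simp [Matrix.IsHermitian, Matrix.conjTranspose_smul, Matrix.conjTranspose_one]
  constructor
  · refine Matrix.posSemidef_iff_dotProduct_mulVec.mpr ⟨hBH.sub (hsm _), fun x => ?_⟩
    rw [star_trivial, Matrix.sub_mulVec, Matrix.smul_mulVec, Matrix.one_mulVec,
      dotProduct_sub, dotProduct_smul, smul_eq_mul]
    exact sub_nonneg.2 (key x).1
  · refine Matrix.posSemidef_iff_dotProduct_mulVec.mpr ⟨(hsm _).sub hBH, fun x => ?_⟩
    rw [star_trivial, Matrix.sub_mulVec, Matrix.smul_mulVec, Matrix.one_mulVec,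
      dotProduct_sub, dotProduct_smul, smul_eq_mul]
    exact sub_nonneg.2 (key x).2
end

section
/- Let η(x) be a Γ-periodic symmetric positive definite matrix function with η, η⁻¹ ∈ L∞, and suppose each column l_j(x) of η(x)⁻¹ has the form l_j(x) = ∇φ_j(x) + l_j⁰ with φ_j ∈ H̃¹(Ω) periodic and l_j⁰ ∈ ℝ³ constant. Then the effective matrix equals the harmonic mean: η⁰ = (⨍_Ω η(x)⁻¹ dx)⁻¹, and moreover the matrix η̃(x) := η(x)(Σ∘(x)+1) is constant equal to η⁰. -/
open Matrix MeasureTheory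

/-- if each column `l_j(x)` of `η(x)⁻¹` has the form
`l_j(x) = ∇φ_j(x) + l_j⁰` with `∇φ_j` an admissible periodic gradient (mean zero over
the cell) and `l_j⁰` constant, then the effective matrix equals the harmonic mean,
`η⁰ = (⨍_Ω η⁻¹)⁻¹`, and moreover `η̃(x) = η(x)(Σ∘(x) + 1)` is a.e. constant equal to
`η⁰` (stated columnwise: `η(x)(∇Φ_j(x) + e_j)` is the `j`-th column of `η⁰`).
The cell is modelled by a probability space `(Ω, μ)`, `G` is the subspace of admissible
periodic gradient fields, `gradΦ j = ∇Φ_j` solve the cell problems weakly, and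
`η⁰ i j = ⨍_Ω (η(x)(∇Φ_j(x) + e_j))_i dx`. -/
theorem effective_matrix_eq_harmonic_mean
    {Ω : Type*} [MeasurableSpace Ω] (μ : Measure Ω) [IsProbabilityMeasure μ]
    (η : Ω → Matrix (Fin 3) (Fin 3) ℝ)
    (hηsymm : ∀ x, (η x).IsSymm) (hηpos : ∀ x, (η x).PosDef)
    (c C : ℝ) (hc : 0 < c)
    (hbound : ∀ x v, c * (∑ i, v i ^ 2) ≤ (η x *ᵥ v) ⬝ᵥ v
      ∧ (η x *ᵥ v) ⬝ᵥ v ≤ C * (∑ i, v i ^ 2))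
    (hηint : ∀ i j, Integrable (fun x => η x i j) μ)
    (hηinvint : ∀ i j, Integrable (fun x => (η x)⁻¹ i j) μ)
    (G : Submodule ℝ (Ω → Fin 3 → ℝ))
    (hGint : ∀ g ∈ G, ∀ i, Integrable (fun x => g x i) μ)
    (hGmean : ∀ g ∈ G, ∀ i, ∫ x, g x i ∂μ = 0)
    (hGenergy : ∀ g ∈ G, ∀ g' ∈ G, ∀ v w : Fin 3 → ℝ,
      Integrable (fun x => (η x *ᵥ (g x + v)) ⬝ᵥ (g' x + w)) μ)
    (gradΦ : Fin 3 → Ω → Fin 3 → ℝ)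
    (hΦG : ∀ j, gradΦ j ∈ G)
    (hcell : ∀ j, ∀ g ∈ G,
      ∫ x, (η x *ᵥ (gradΦ j x + Pi.single j 1)) ⬝ᵥ g x ∂μ = 0)
    (η₀ : Matrix (Fin 3) (Fin 3) ℝ)
    (hη₀ : ∀ i j, η₀ i j = ∫ x, (η x *ᵥ (gradΦ j x + Pi.single j 1)) i ∂μ)
    -- the columns of `η⁻¹` are gradients plus constants:
    (gφ : Fin 3 → Ω → Fin 3 → ℝ) (l₀ : Fin 3 → Fin 3 → ℝ)
    (hgφ : ∀ j, gφ j ∈ G)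
    (hcol : ∀ j, ∀ x, (fun i => (η x)⁻¹ i j) = gφ j x + l₀ j) :
    η₀ = ((Matrix.of fun i j => ∫ x, (η x)⁻¹ i j ∂μ) : Matrix (Fin 3) (Fin 3) ℝ)⁻¹
      ∧ ∀ᵐ x ∂μ, ∀ j, η x *ᵥ (gradΦ j x + Pi.single j 1) = fun i => η₀ i j := by

  classical
  have key : ∀ j : Fin 3,
      (∀ i, (∑ k, η₀ k j * l₀ k i) = (Pi.single j 1 : Fin 3 → ℝ) i) ∧
      (∀ᵐ x ∂μ, η x *ᵥ (gradΦ j x + Pi.single j 1) = fun i => η₀ i j) := by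
    intro j
    set w : Fin 3 → ℝ := fun i => η₀ i j with hw
    set gs : Ω → Fin 3 → ℝ := fun x i => ∑ k, w k * gφ k x i with hgs
    have hgsG : gs ∈ G := by
      have h : (∑ k, w k • gφ k : Ω → Fin 3 → ℝ) ∈ G :=
        Submodule.sum_mem _ (fun k _ => Submodule.smul_mem _ _ (hgφ k))
      convert h using 1
      rw [hgs]; funext x i; simp [Finset.sum_apply]
    set Lw : Fin 3 → ℝ := fun i => ∑ k, w k * l₀ k i with hLw
    set gt : Ω → Fin 3 → ℝ := fun x i => gradΦ j x i - gs x i with hgt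
    have hgtG : gt ∈ G := Submodule.sub_mem G (hΦG j) hgsG
    set b : Fin 3 → ℝ := fun i => (Pi.single j 1 : Fin 3 → ℝ) i - Lw i with hb
    set z : Ω → Fin 3 → ℝ := fun x i => gt x i + b i with hz
    set u : Ω → Fin 3 → ℝ := fun x => η x *ᵥ (gradΦ j x + Pi.single j 1) with hu
    -- pointwise: η⁻¹ *ᵥ w = gs + Lw
    have hinv : ∀ x, (η x)⁻¹ *ᵥ w = fun i => gs x i + Lw i := by
      intro x
      funext i
      have hck : ∀ k, (η x)⁻¹ i k = gφ k x i + l₀ k i := fun k => congrFun (hcol k x) i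
      simp only [Matrix.mulVec, dotProduct, hck, hgs, hLw]
      rw [← Finset.sum_add_distrib]
      exact Finset.sum_congr rfl (fun k _ => by ring)
    -- pointwise: η z = u - w
    have hηz : ∀ x, η x *ᵥ z x = fun i => u x i - w i := by
      intro x
      have h1 : z x = (gradΦ j x + Pi.single j 1) - ((η x)⁻¹ *ᵥ w) := by
        rw [hinv x]; funext i
        simp only [hz, hgt, hb, Pi.sub_apply, Pi.add_apply]; ring
      rw [h1, Matrix.mulVec_sub, Matrix.mulVec_mulVec,
        Matrix.mul_nonsing_inv _ (isUnit_iff_ne_zero.mpr (hηpos x).det_pos.ne'),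
        Matrix.one_mulVec]
      rfl
    -- integrability facts
    have hui : ∀ i, Integrable (fun x => u x i) μ := by
      intro i
      have h := hGenergy (gradΦ j) (hΦG j) 0 (zero_mem _) (Pi.single j 1) (Pi.single i 1)
      simpa [dotProduct_single, hu] using h
    have hmean_u : ∀ i, ∫ x, u x i ∂μ = w i := by
      intro i
      simp only [hu]
      exact (hη₀ i j).symm
    have hT1int : Integrable (fun x => u x ⬝ᵥ gt x) μ := by
      have h := hGenergy (gradΦ j) (hΦG j) gt hgtG (Pi.single j 1) 0
      simpa [hu] using h
    have hT2int : Integrable (fun x => u x ⬝ᵥ b) μ := by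
      have he : (fun x => u x ⬝ᵥ b) = fun x => ∑ i, u x i * b i := rfl
      rw [he]
      exact integrable_finset_sum _ (fun i _ => (hui i).mul_const _)
    have hT3int : Integrable (fun x => w ⬝ᵥ gt x) μ := by
      have he : (fun x => w ⬝ᵥ gt x) = fun x => ∑ i, w i * gt x i := rfl
      rw [he]
      exact integrable_finset_sum _ (fun i _ => (hGint gt hgtG i).const_mul _)
    -- the energy functional
    have hFeq : (fun x => (η x *ᵥ z x) ⬝ᵥ z x)
        = fun x => u x ⬝ᵥ gt x + u x ⬝ᵥ b - w ⬝ᵥ gt x - w ⬝ᵥ b := by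
      funext x
      rw [hηz x]; simp only [dotProduct, hz]
      rw [← Finset.sum_add_distrib, ← Finset.sum_sub_distrib, ← Finset.sum_sub_distrib]
      exact Finset.sum_congr rfl (fun i _ => by ring)
    have hFint : Integrable (fun x => (η x *ᵥ z x) ⬝ᵥ z x) μ := by
      rw [hFeq]
      exact (((hT1int.add hT2int).sub hT3int).sub (integrable_const _))
    have hI1 : Integrable (fun x => u x ⬝ᵥ gt x + u x ⬝ᵥ b - w ⬝ᵥ gt x) μ :=
      (hT1int.add hT2int).sub hT3int
    have hI2 : Integrable (fun x => u x ⬝ᵥ gt x + u x ⬝ᵥ b) μ := hT1int.add hT2int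
    have hFint0 : ∫ x, (η x *ᵥ z x) ⬝ᵥ z x ∂μ = 0 := by
      rw [hFeq]
      rw [integral_sub hI1 (integrable_const _),
        integral_sub hI2 hT3int, integral_add hT1int hT2int]
      have h1 : ∫ x, u x ⬝ᵥ gt x ∂μ = 0 := hcell j gt hgtG
      have h2 : ∫ x, u x ⬝ᵥ b ∂μ = w ⬝ᵥ b := by
        have he : (fun x => u x ⬝ᵥ b) = fun x => ∑ i, u x i * b i := rfl
        rw [he, integral_finset_sum _ (fun i _ => (hui i).mul_const _)]
        exact Finset.sum_congr rfl (fun i _ => by rw [integral_mul_const, hmean_u i])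
      have h3 : ∫ x, w ⬝ᵥ gt x ∂μ = 0 := by
        have he : (fun x => w ⬝ᵥ gt x) = fun x => ∑ i, w i * gt x i := rfl
        rw [he, integral_finset_sum _ (fun i _ => (hGint gt hgtG i).const_mul _)]
        refine Finset.sum_eq_zero (fun i _ => ?_)
        rw [integral_const_mul, hGmean gt hgtG i, mul_zero]
      rw [h1, h2, h3, integral_const]
      simp
    have hFnn : 0 ≤ fun x => (η x *ᵥ z x) ⬝ᵥ z x := by
      intro x
      refine le_trans ?_ (hbound x (z x)).1
      positivity
    have hF0 : (fun x => (η x *ᵥ z x) ⬝ᵥ z x) =ᶠ[ae μ] 0 :=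
      (integral_eq_zero_iff_of_nonneg hFnn hFint).mp hFint0
    have hz0 : ∀ᵐ x ∂μ, ∀ i, z x i = 0 := by
      filter_upwards [hF0] with x hx
      intro i
      simp only [Pi.zero_apply] at hx
      have hle := (hbound x (z x)).1
      rw [hx] at hle
      have hnn : (0:ℝ) ≤ ∑ i, z x i ^ 2 := by positivity
      have hsum : ∑ i, z x i ^ 2 = 0 := by nlinarith
      have hsq := (Finset.sum_eq_zero_iff_of_nonneg
        (fun i _ => sq_nonneg (z x i))).mp hsum i (Finset.mem_univ i)
      exact pow_eq_zero_iff two_ne_zero |>.mp hsq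
    constructor
    · intro i
      have hzi : (fun x => z x i) =ᶠ[ae μ] 0 := by
        filter_upwards [hz0] with x hx using hx i
      have hint0 : ∫ x, z x i ∂μ = 0 := by
        rw [integral_congr_ae hzi]; simp
      have hzib : ∫ x, z x i ∂μ = b i := by
        have he : (fun x => z x i) = fun x => gt x i + b i := rfl
        rw [he, integral_add (hGint gt hgtG i) (integrable_const _),
          hGmean gt hgtG i, integral_const]
        simp
      have hbi : b i = 0 := by rw [← hzib, hint0]
      have hLwi : Lw i = (Pi.single j 1 : Fin 3 → ℝ) i := by
        have h := hbi
        simp only [hb] at h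
        linarith
      calc (∑ k, η₀ k j * l₀ k i) = Lw i := rfl
        _ = (Pi.single j 1 : Fin 3 → ℝ) i := hLwi
    · filter_upwards [hz0] with x hx
      have hzx : z x = 0 := funext hx
      have h := hηz x
      rw [hzx, Matrix.mulVec_zero] at h
      show u x = w
      funext i
      have hi := congrFun h i
      simp only [Pi.zero_apply] at hi
      linarith
  constructor
  · have hmul : ((Matrix.of fun i k => ∫ x, (η x)⁻¹ i k ∂μ) : Matrix (Fin 3) (Fin 3) ℝ)
        * η₀ = 1 := by
      ext i j
      have hA : ∀ k, ∫ x, (η x)⁻¹ i k ∂μ = l₀ k i := by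
        intro k
        have he : (fun x => (η x)⁻¹ i k) = fun x => gφ k x i + l₀ k i :=
          funext fun x => congrFun (hcol k x) i
        rw [he, integral_add (hGint _ (hgφ k) i) (integrable_const _),
          hGmean _ (hgφ k) i, integral_const]
        simp
      simp only [Matrix.mul_apply, Matrix.of_apply, hA]
      rw [show ∑ k, l₀ k i * η₀ k j = ∑ k, η₀ k j * l₀ k i from
        Finset.sum_congr rfl fun k _ => mul_comm _ _, (key j).1 i]
      rw [Pi.single_apply, Matrix.one_apply]
    exact (Matrix.inv_eq_right_inv hmul).symm
  · exact ae_all_iff.mpr fun j => (key j).2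
end
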